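/- Let α ∈ (0,1), β ∈ ℝ, λ > 0, and set c_α = (1−α/2)(1−α). Define Λ(z) = (Γ(α)λ/c_α)·(z²−β²) + ∫₀^∞ 2t^α/(t²−z²) dt for z ∈ ℂ∖ℝ. Then: (i) Λ(z) = (Γ(α)λ/c_α)·(z²−β²) + z^{α−1}·(π/cos(πα/2))·e^{(1−α)πi/2} for Im z > 0 and Λ(z) = (Γ(α)λ/c_α)·(z²−β²) + z^{α−1}·(π/cos(πα/2))·e^{−(1−α)πi/2} for Im z < 0 (principal branch powers); (ii) the equation λ = (c_α/Γ(α))·(π/cos(πα/2))·ν^{α−1}/(β²+ν²) has a unique solution ν > 0; and (iii) the set of zeros of Λ in ℂ∖ℝ is exactly {iν, −iν} for this ν. -/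

import Mathlib

open Real Complex Set

/-- `Λ(z) = (Γ(α)λ/c_α)(z²−β²) + ∫₀^∞ 2t^α/(t²−z²) dt` with `c_α = (1−α/2)(1−α)`. -/
noncomputable def LambdaFn (α β lam : ℝ) (z : ℂ) : ℂ :=
  ((Real.Gamma α * lam / ((1 - α / 2) * (1 - α)) : ℝ) : ℂ) * (z ^ 2 - (β : ℂ) ^ 2) +
    ∫ t in Set.Ioi (0:ℝ), 2 * ((t : ℂ) ^ (α : ℂ)) / ((t : ℂ) ^ 2 - z ^ 2)


open MeasureTheory Filter

lemma intExpNeg {b : ℝ} (hb : 0 < b) : ∫ u in Ioi (0:ℝ), Real.exp (-(b*u)) = b⁻¹ := by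
  have h := MeasureTheory.integral_comp_mul_left_Ioi (fun u => Real.exp (-u)) 0 hb
  simp only [mul_zero] at h
  rw [h, integral_exp_neg_Ioi]
  simp

lemma integrableOn_exp_smul {b : ℝ} (hb : 0 < b) :
    IntegrableOn (fun u : ℝ => Real.exp (-(b * u))) (Ioi 0) := by
  have := exp_neg_integrableOn_Ioi 0 hb
  apply this.congr_fun (fun u _ => by ring_nf) measurableSet_Ioi

lemma integrableOn_target {μ : ℝ} (h0 : 0 < μ) (h1 : μ < 1) :
    IntegrableOn (fun s : ℝ => s ^ (μ - 1) / (1 + s)) (Ioi 0) := by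
  have hmeas : AEStronglyMeasurable (fun s : ℝ => s ^ (μ - 1) / (1 + s)) := by
    exact ((by fun_prop : Measurable fun s : ℝ => s ^ (μ-1) / (1+s))).aestronglyMeasurable
  rw [← Set.Ioc_union_Ioi_eq_Ioi (zero_le_one)]
  apply IntegrableOn.union
  · have base : IntegrableOn (fun s : ℝ => s ^ (μ - 1)) (Ioc 0 1) := by
      have := intervalIntegral.intervalIntegrable_rpow' (a := 0) (b := 1)
        (by linarith : (-1:ℝ) < μ - 1)
      rwa [intervalIntegrable_iff, uIoc_of_le zero_le_one] at this
    refine MeasureTheory.Integrable.mono base hmeas.restrict ?_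
    filter_upwards [ae_restrict_mem measurableSet_Ioc] with s hs
    have hs0 : (0:ℝ) < s := hs.1
    rw [Real.norm_eq_abs, Real.norm_eq_abs, _root_.abs_of_nonneg (by positivity : (0:ℝ) ≤ s ^ (μ-1) / (1+s)),
      _root_.abs_of_nonneg (by positivity : (0:ℝ) ≤ s ^ (μ-1))]
    exact div_le_self (by positivity) (by linarith)
  · have base : IntegrableOn (fun s : ℝ => s ^ (μ - 2)) (Ioi 1) :=
      integrableOn_Ioi_rpow_of_lt (by linarith) one_pos
    refine MeasureTheory.Integrable.mono base hmeas.restrict ?_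
    filter_upwards [ae_restrict_mem measurableSet_Ioi] with s hs
    have hs0 : (0:ℝ) < s := lt_trans one_pos hs
    rw [Real.norm_eq_abs, Real.norm_eq_abs, _root_.abs_of_nonneg (by positivity : (0:ℝ) ≤ s ^ (μ-1) / (1+s)),
      _root_.abs_of_nonneg (by positivity : (0:ℝ) ≤ s ^ (μ-2))]
    calc s ^ (μ-1) / (1+s) ≤ s ^ (μ-1) / s :=
          div_le_div_of_nonneg_left (by positivity) hs0 (by linarith)
      _ = s ^ (μ-2) := by
          rw [show μ - 2 = μ-1-1 by ring, Real.rpow_sub hs0 (μ-1) 1, Real.rpow_one]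

lemma mellin_one_add {μ : ℝ} (h0 : 0 < μ) (h1 : μ < 1) :
    ∫ s in Ioi (0:ℝ), s ^ (μ - 1) / (1 + s) = π / Real.sin (π * μ) := by
  have hint : Integrable
      (fun p : ℝ × ℝ => p.1 ^ (μ - 1) * Real.exp (-((1 + p.1) * p.2)))
      ((volume.restrict (Ioi (0:ℝ))).prod (volume.restrict (Ioi (0:ℝ)))) := by
    have hm : AEStronglyMeasurable
        (fun p : ℝ × ℝ => p.1 ^ (μ - 1) * Real.exp (-((1 + p.1) * p.2)))
        ((volume.restrict (Ioi (0:ℝ))).prod (volume.restrict (Ioi (0:ℝ)))) := by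
      apply Measurable.aestronglyMeasurable; fun_prop
    rw [MeasureTheory.integrable_prod_iff hm]
    constructor
    · filter_upwards [ae_restrict_mem measurableSet_Ioi] with s hs
      have h1s : (0:ℝ) < 1 + s := by have := (mem_Ioi.mp hs); linarith
      exact (integrableOn_exp_smul h1s).const_mul _
    · refine (integrableOn_target h0 h1).congr ?_
      filter_upwards [ae_restrict_mem measurableSet_Ioi] with s hs
      have hs0 : (0:ℝ) < s := hs
      have h1s : (0:ℝ) < 1 + s := by linarith
      have : ∀ u : ℝ, ‖s ^ (μ-1) * Real.exp (-((1+s)*u))‖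
          = s ^ (μ-1) * Real.exp (-((1+s)*u)) := by
        intro u; rw [Real.norm_eq_abs, _root_.abs_of_nonneg (by positivity : (0:ℝ) ≤ s ^ (μ-1) * Real.exp (-((1+s)*u)))]
      simp only [this]
      rw [integral_const_mul, intExpNeg h1s, div_eq_mul_inv]
  have swap := MeasureTheory.integral_integral_swap (f := fun s u => s ^ (μ-1) * Real.exp (-((1+s)*u))) hint
  have lhs_eq : ∫ s in Ioi (0:ℝ), s ^ (μ - 1) / (1 + s)
      = ∫ s in Ioi (0:ℝ), ∫ u in Ioi (0:ℝ), s ^ (μ-1) * Real.exp (-((1+s)*u)) := by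
    refine setIntegral_congr_fun measurableSet_Ioi (fun s hs => ?_)
    have hs0 : (0:ℝ) < s := hs
    have h1s : (0:ℝ) < 1 + s := by linarith
    rw [integral_const_mul, intExpNeg h1s, div_eq_mul_inv]
  have rhs_eq : ∫ u in Ioi (0:ℝ), ∫ s in Ioi (0:ℝ), s ^ (μ-1) * Real.exp (-((1+s)*u))
      = Real.Gamma μ * Real.Gamma (1 - μ) := by
    have inner : ∀ u : ℝ, 0 < u →
        (∫ s in Ioi (0:ℝ), s ^ (μ-1) * Real.exp (-((1+s)*u)))
          = Real.Gamma μ * (Real.exp (-u) * u ^ ((1-μ) - 1)) := by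
      intro u hu
      have e1 : ∀ s : ℝ, s ^ (μ-1) * Real.exp (-((1+s)*u))
          = Real.exp (-u) * (s ^ (μ-1) * Real.exp (-u * s)) := by
        intro s
        rw [show -((1+s)*u) = -u + -(u*s) by ring, Real.exp_add]
        ring
      simp only [e1]
      rw [integral_const_mul]
      have key : (∫ s in Ioi (0:ℝ), s ^ (μ-1) * Real.exp (-u * s))
          = u ^ (-μ) * Real.Gamma μ := by
        have := _root_.integral_rpow_mul_exp_neg_mul_rpow (p := 1) (q := μ - 1) (b := u)
          one_pos (by linarith) hu
        simp only [Real.rpow_one] at this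
        rw [this]; norm_num
      rw [key]
      rw [show (1 - μ) - 1 = -μ by ring]
      ring
    rw [setIntegral_congr_fun measurableSet_Ioi (fun u hu => inner u hu)]
    rw [integral_const_mul, ← Real.Gamma_eq_integral (by linarith : (0:ℝ) < 1 - μ)]
  rw [lhs_eq, swap, rhs_eq, Real.Gamma_mul_Gamma_one_sub]

lemma J_one {α : ℝ} (h0 : 0 < α) (h1 : α < 1) :
    ∫ t in Ioi (0:ℝ), 2 * t ^ α / (t ^ 2 + 1) = π / Real.cos (π * α / 2) := by
  have key := MeasureTheory.integral_comp_rpow_Ioi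
    (fun s => s ^ ((α - 1)/2) / (1 + s)) (p := 2) two_ne_zero
  have huα : (α + 1) / 2 - 1 = (α - 1) / 2 := by ring
  have lhs_eq : (∫ x in Ioi (0:ℝ), (|(2:ℝ)| * x ^ ((2:ℝ) - 1)) •
      ((x ^ (2:ℝ)) ^ ((α - 1)/2) / (1 + x ^ (2:ℝ))))
      = ∫ t in Ioi (0:ℝ), 2 * t ^ α / (t ^ 2 + 1) := by
    refine setIntegral_congr_fun measurableSet_Ioi (fun x hx => ?_)
    have hx0 : (0:ℝ) < x := hx
    have h2 : x ^ (2:ℝ) = x ^ 2 := by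
      rw [show (2:ℝ) = ((2:ℕ):ℝ) by norm_num, Real.rpow_natCast]
    have h3 : (x ^ (2:ℝ)) ^ ((α - 1)/2) = x ^ (α - 1) := by
      rw [← Real.rpow_mul hx0.le, show 2 * ((α - 1)/2) = α - 1 by ring]
    rw [h2, h3] at *
    have h4 : x ^ ((2:ℝ) - 1) = x := by
      norm_num
    rw [h4]
    have h5 : x * x ^ (α - 1) = x ^ α := by
      nth_rewrite 1 [← Real.rpow_one x]
      rw [← Real.rpow_add hx0]; norm_num
    rw [smul_eq_mul]
    rw [show |(2:ℝ)| * x * (x ^ (α-1) / (1 + x ^ 2)) = 2 * (x * x ^ (α-1)) / (x ^ 2 + 1) by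
      rw [_root_.abs_two]; ring, h5]
  have sin_eq : Real.sin (π * ((α + 1)/2)) = Real.cos (π * α / 2) := by
    rw [show π * ((α + 1)/2) = π * α / 2 + π / 2 by ring, Real.sin_add_pi_div_two]
  calc ∫ t in Ioi (0:ℝ), 2 * t ^ α / (t ^ 2 + 1)
      = ∫ s in Ioi (0:ℝ), s ^ ((α + 1)/2 - 1) / (1 + s) := by
        rw [← lhs_eq, key]
        refine setIntegral_congr_fun measurableSet_Ioi (fun s hs => ?_)
        rw [huα]
    _ = π / Real.sin (π * ((α + 1)/2)) :=
        mellin_one_add (by linarith) (by linarith)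
    _ = π / Real.cos (π * α / 2) := by rw [sin_eq]

lemma J_y {α : ℝ} (h0 : 0 < α) (h1 : α < 1) {y : ℝ} (hy : 0 < y) :
    ∫ t in Ioi (0:ℝ), 2 * t ^ α / (t ^ 2 + y ^ 2)
      = y ^ (α - 1) * (π / Real.cos (π * α / 2)) := by
  have key := MeasureTheory.integral_comp_mul_left_Ioi
    (fun t => 2 * t ^ α / (t ^ 2 + y ^ 2)) 0 hy
  simp only [mul_zero, smul_eq_mul] at key
  have lhs_eq : (∫ x in Ioi (0:ℝ), 2 * (y * x) ^ α / ((y * x) ^ 2 + y ^ 2))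
      = y ^ (α - 2) * ∫ t in Ioi (0:ℝ), 2 * t ^ α / (t ^ 2 + 1) := by
    rw [← integral_const_mul]
    refine setIntegral_congr_fun measurableSet_Ioi (fun x hx => ?_)
    have hx0 : (0:ℝ) < x := hx
    rw [Real.mul_rpow hy.le hx0.le]
    have hy2 : (y * x) ^ 2 + y ^ 2 = y ^ 2 * (x ^ 2 + 1) := by ring
    rw [hy2]
    rw [show y ^ (α - 2) = y ^ α / y ^ 2 by
      rw [Real.rpow_sub hy, show y ^ (2:ℝ) = y ^ 2 by
        rw [show (2:ℝ) = ((2:ℕ):ℝ) by norm_num, Real.rpow_natCast]]]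
    field_simp
  rw [lhs_eq, J_one h0 h1] at key
  have : (∫ t in Ioi (0:ℝ), 2 * t ^ α / (t ^ 2 + y ^ 2))
      = y * (y ^ (α - 2) * (π / Real.cos (π * α / 2))) := by
    rw [key, ← mul_assoc, mul_inv_cancel₀ hy.ne', one_mul]
  rw [this, ← mul_assoc]
  congr 1
  nth_rewrite 1 [← Real.rpow_one y]
  rw [← Real.rpow_add hy, show 1 + (α - 2) = α - 1 by ring]

noncomputable def Phi (α : ℝ) (z : ℂ) : ℂ :=
  ∫ t in Ioi (0:ℝ), 2 * ((t : ℂ) ^ (α : ℂ)) / ((t : ℂ) ^ 2 - z ^ 2)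

lemma abs_denom_ge_im_sq (z : ℂ) (t : ℝ) :
    z.im ^ 2 ≤ ‖(t:ℂ) ^ 2 - z ^ 2‖ := by
  have hfac : (t:ℂ) ^ 2 - z ^ 2 = ((t:ℂ) - z) * ((t:ℂ) + z) := by ring
  rw [hfac, norm_mul]
  have h1 : |z.im| ≤ ‖(t:ℂ) - z‖ := by
    have := Complex.abs_im_le_norm ((t:ℂ) - z)
    simpa using this
  have h2 : |z.im| ≤ ‖(t:ℂ) + z‖ := by
    have := Complex.abs_im_le_norm ((t:ℂ) + z)
    simpa using this
  calc z.im ^ 2 = |z.im| * |z.im| := by rw [← _root_.sq_abs z.im]; ring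
    _ ≤ _ := mul_le_mul h1 h2 (abs_nonneg _) (norm_nonneg _)

lemma abs_denom_ge_sub (z : ℂ) {t : ℝ} (ht : 0 ≤ t) :
    t ^ 2 - ‖z‖ ^ 2 ≤ ‖(t:ℂ) ^ 2 - z ^ 2‖ := by
  have := norm_sub_norm_le ((t:ℂ) ^ 2) (z ^ 2)
  have e1 : ‖(t:ℂ) ^ 2‖ = t ^ 2 := by
    rw [norm_pow, Complex.norm_real, Real.norm_eq_abs, _root_.abs_of_nonneg ht]
  have e2 : ‖z ^ 2‖ = ‖z‖ ^ 2 := by rw [norm_pow]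
  rw [e1, e2] at this
  exact this

lemma abs_denom_lower {z : ℂ} {δ M t : ℝ} (hδ : 0 < δ) (him : δ ≤ |z.im|)
    (hM : ‖z‖ ≤ M) (ht : 0 < t) :
    (if t ≤ 2*M+1 then δ^2 else t^2/2) ≤ ‖(t:ℂ) ^ 2 - z ^ 2‖ := by
  have hM0 : 0 ≤ M := le_trans (norm_nonneg z) hM
  split_ifs with h
  · calc δ^2 ≤ z.im^2 := by
          rw [← _root_.sq_abs z.im]; exact pow_le_pow_left₀ hδ.le him 2
      _ ≤ _ := abs_denom_ge_im_sq z t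
  · push_neg at h
    have h2 : M ^ 2 ≤ t^2/2 := by nlinarith
    calc t^2/2 ≤ t^2 - M^2 := by linarith
      _ ≤ t^2 - ‖z‖ ^ 2 := by nlinarith [norm_nonneg z]
      _ ≤ _ := abs_denom_ge_sub z ht.le

lemma integrable_bound {α : ℝ} (h0 : 0 < α) (h1 : α < 1) {c₁ c₂ T p : ℝ}
    (hT : 0 < T) (hp : p < -1) :
    IntegrableOn (fun t : ℝ => if t ≤ T then c₁ * t ^ α else c₂ * t ^ p) (Ioi 0) := by
  rw [← Set.Ioc_union_Ioi_eq_Ioi hT.le]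
  apply IntegrableOn.union
  · have base : IntegrableOn (fun t : ℝ => c₁ * t ^ α) (Ioc 0 T) := by
      have := (intervalIntegral.intervalIntegrable_rpow' (a := 0) (b := T)
        (by linarith : (-1:ℝ) < α)).const_mul c₁
      rwa [intervalIntegrable_iff, uIoc_of_le hT.le] at this
    refine base.congr_fun (fun t ht => ?_) measurableSet_Ioc
    rw [if_pos ht.2]
  · have base : IntegrableOn (fun t : ℝ => c₂ * t ^ p) (Ioi T) :=
      (integrableOn_Ioi_rpow_of_lt hp hT).const_mul c₂
    refine base.congr_fun (fun t ht => ?_) measurableSet_Ioi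
    rw [if_neg (not_le.mpr ht)]

lemma integrand_norm {α : ℝ} (z : ℂ) {t : ℝ} (ht : 0 < t) :
    ‖2 * ((t : ℂ) ^ (α : ℂ)) / ((t : ℂ) ^ 2 - z ^ 2)‖
      = 2 * t ^ α / ‖(t:ℂ) ^ 2 - z ^ 2‖ := by
  rw [norm_div, norm_mul, Complex.norm_two,
    Complex.norm_cpow_eq_rpow_re_of_pos ht, Complex.ofReal_re]

lemma integrand_aesm {α : ℝ} (z : ℂ) :
    AEStronglyMeasurable (fun t : ℝ => 2 * ((t : ℂ) ^ (α : ℂ)) / ((t : ℂ) ^ 2 - z ^ 2))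
      (volume.restrict (Ioi 0)) := by
  have hmeas : Measurable (fun t : ℝ => 2 * (((t ^ α : ℝ)) : ℂ) / ((t : ℂ) ^ 2 - z ^ 2)) := by
    fun_prop
  refine hmeas.aestronglyMeasurable.congr ?_
  filter_upwards [ae_restrict_mem measurableSet_Ioi] with t ht
  rw [Complex.ofReal_cpow (le_of_lt ht)]

lemma integrand_deriv_aesm {α : ℝ} (z : ℂ) :
    AEStronglyMeasurable
      (fun t : ℝ => 2 * ((t : ℂ) ^ (α : ℂ)) * (2 * z) / ((t : ℂ) ^ 2 - z ^ 2) ^ 2)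
      (volume.restrict (Ioi 0)) := by
  have hmeas : Measurable
      (fun t : ℝ => 2 * (((t ^ α : ℝ)) : ℂ) * (2 * z) / ((t : ℂ) ^ 2 - z ^ 2) ^ 2) := by
    fun_prop
  refine hmeas.aestronglyMeasurable.congr ?_
  filter_upwards [ae_restrict_mem measurableSet_Ioi] with t ht
  rw [Complex.ofReal_cpow (le_of_lt ht)]

lemma integrable_integrand {α : ℝ} (h0 : 0 < α) (h1 : α < 1) {z : ℂ} (hz : z.im ≠ 0) :
    IntegrableOn (fun t : ℝ => 2 * ((t : ℂ) ^ (α : ℂ)) / ((t : ℂ) ^ 2 - z ^ 2)) (Ioi 0) := by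
  set δ : ℝ := |z.im| with hδdef
  have hδ : 0 < δ := abs_pos.mpr hz
  set M : ℝ := ‖z‖ with hMdef
  have hM0 : 0 ≤ M := norm_nonneg z
  have hT : (0:ℝ) < 2*M+1 := by linarith
  refine MeasureTheory.Integrable.mono
    (integrable_bound h0 h1 (c₁ := 2/δ^2) (c₂ := 4) (p := α - 2) hT (by linarith))
    (integrand_aesm z) ?_
  filter_upwards [ae_restrict_mem measurableSet_Ioi] with t ht
  have ht0 : (0:ℝ) < t := ht
  have hlow := abs_denom_lower hδ le_rfl le_rfl ht0
  have habs : (0:ℝ) < ‖(t:ℂ)^2 - z^2‖ := by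
    refine lt_of_lt_of_le ?_ hlow
    split_ifs
    · positivity
    · positivity
  rw [integrand_norm z ht0, Real.norm_eq_abs]
  split_ifs at hlow ⊢ with hcase
  · rw [_root_.abs_of_nonneg (by positivity : (0:ℝ) ≤ 2/δ^2 * t ^ α)]
    calc 2 * t ^ α / ‖(t:ℂ)^2 - z^2‖ ≤ 2 * t ^ α / δ^2 :=
          div_le_div_of_nonneg_left (by positivity) (by positivity) hlow
      _ = 2/δ^2 * t ^ α := by ring
  · rw [_root_.abs_of_nonneg (by positivity : (0:ℝ) ≤ 4 * t ^ (α - 2))]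
    have e : 4 * t ^ (α-2) = 2 * t ^ α / (t^2/2) := by
      rw [Real.rpow_sub ht0, show t ^ (2:ℝ) = t^2 by
        rw [show (2:ℝ) = ((2:ℕ):ℝ) by norm_num, Real.rpow_natCast]]
      field_simp
      ring
    rw [e]
    exact div_le_div_of_nonneg_left (by positivity) (by positivity) hlow

lemma Phi_differentiableAt {α : ℝ} (h0 : 0 < α) (h1 : α < 1) {z₀ : ℂ} (hz : z₀.im ≠ 0) :
    DifferentiableAt ℂ (Phi α) z₀ := by
  set ε : ℝ := |z₀.im| / 2 with hεdef
  have hε : 0 < ε := by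
    have : 0 < |z₀.im| := abs_pos.mpr hz
    positivity
  set δ : ℝ := |z₀.im| / 2 with hδdef
  set M : ℝ := ‖z₀‖ + ε with hMdef
  have hM0 : (0:ℝ) ≤ M := by positivity
  have hT : (0:ℝ) < 2*M+1 := by linarith
  -- facts about z in the ball
  have hball : ∀ z ∈ Metric.ball z₀ ε, δ ≤ |z.im| ∧ ‖z‖ ≤ M := by
    intro z hzb
    rw [Metric.mem_ball, Complex.dist_eq] at hzb
    have him : |z.im - z₀.im| ≤ ‖z - z₀‖ := by
      have := Complex.abs_im_le_norm (z - z₀)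
      simpa using this
    constructor
    · have : |z₀.im| - |z.im| ≤ |z.im - z₀.im| := by
        have := abs_sub_abs_le_abs_sub z₀.im z.im
        rwa [abs_sub_comm] at this
      have : |z₀.im| - |z.im| ≤ ε := le_trans this (le_trans him hzb.le)
      rw [hδdef]; linarith
    · have h2 : ‖z‖ - ‖z₀‖ ≤ ‖z - z₀‖ := by
        have := norm_sub_norm_le z z₀
        simpa using this
      rw [hMdef]; linarith
  -- the dominated derivative argument
  set bound : ℝ → ℝ := fun t =>
    if t ≤ 2*M+1 then (4*M/δ^4) * t ^ α else (16*M) * t ^ (α - 4) with hbd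
  have key := hasDerivAt_integral_of_dominated_loc_of_deriv_le (μ := volume.restrict (Ioi 0))
    (F := fun z (t : ℝ) => 2 * ((t : ℂ) ^ (α : ℂ)) / ((t : ℂ) ^ 2 - z ^ 2))
    (F' := fun z (t : ℝ) => 2 * ((t : ℂ) ^ (α : ℂ)) * (2 * z) / ((t : ℂ) ^ 2 - z ^ 2) ^ 2)
    (x₀ := z₀) (bound := bound) (Metric.ball_mem_nhds z₀ hε)
    (Filter.Eventually.of_forall (fun z => integrand_aesm z))
    (integrable_integrand h0 h1 hz)
    (integrand_deriv_aesm z₀) ?_ ?_ ?_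
  · exact key.2.differentiableAt
  · -- norm bound on the derivative
    filter_upwards [ae_restrict_mem measurableSet_Ioi] with t ht
    intro z hzb
    have ht0 : (0:ℝ) < t := ht
    obtain ⟨him, habs⟩ := hball z hzb
    have hδ0 : 0 < δ := hε
    have hlow := abs_denom_lower hδ0 him habs ht0
    have habs0 : (0:ℝ) < ‖(t:ℂ)^2 - z^2‖ := by
      refine lt_of_lt_of_le ?_ hlow
      split_ifs
      · positivity
      · positivity
    have hnorm : ‖2 * ((t : ℂ) ^ (α : ℂ)) * (2 * z) / ((t : ℂ) ^ 2 - z ^ 2) ^ 2‖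
        = 2 * t ^ α * (2 * ‖z‖) / ‖(t:ℂ) ^ 2 - z ^ 2‖ ^ 2 := by
      rw [norm_div, norm_mul, norm_mul, norm_mul, norm_pow,
        Complex.norm_two, Complex.norm_cpow_eq_rpow_re_of_pos ht0, Complex.ofReal_re]
    rw [hnorm, hbd]
    beta_reduce
    have hz_abs : ‖z‖ ≤ M := habs
    split_ifs at hlow ⊢ with hcase
    · have hδ2 : δ^2 ≤ ‖(t:ℂ)^2 - z^2‖ := hlow
      calc 2 * t ^ α * (2 * ‖z‖) / ‖(t:ℂ) ^ 2 - z ^ 2‖ ^ 2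
          ≤ 2 * t ^ α * (2 * M) / (δ^2)^2 := by
            apply div_le_div₀ (by positivity)
            · have : (0:ℝ) ≤ 2 * t ^ α := by positivity
              nlinarith [Real.rpow_nonneg ht0.le α]
            · positivity
            · exact pow_le_pow_left₀ (by positivity) hδ2 2
        _ = (4*M/δ^4) * t ^ α := by
            rw [show (δ^2)^2 = δ^4 by ring]; ring
    · have ht2 : t^2/2 ≤ ‖(t:ℂ)^2 - z^2‖ := hlow
      calc 2 * t ^ α * (2 * ‖z‖) / ‖(t:ℂ) ^ 2 - z ^ 2‖ ^ 2
          ≤ 2 * t ^ α * (2 * M) / (t^2/2)^2 := by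
            apply div_le_div₀ (by positivity)
            · nlinarith [Real.rpow_nonneg ht0.le α]
            · positivity
            · exact pow_le_pow_left₀ (by positivity) ht2 2
        _ = (16*M) * (t ^ α / t^4) := by ring
        _ = (16*M) * t ^ (α - 4) := by
            congr 1
            rw [Real.rpow_sub ht0, show t ^ (4:ℝ) = t^4 by
              rw [show (4:ℝ) = ((4:ℕ):ℝ) by norm_num, Real.rpow_natCast]]
  · -- integrability of the bound
    exact integrable_bound h0 h1 hT (by linarith)
  · -- differentiability of the integrand in z
    filter_upwards [ae_restrict_mem measurableSet_Ioi] with t ht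
    intro z hzb
    have ht0 : (0:ℝ) < t := ht
    obtain ⟨him, habs⟩ := hball z hzb
    have hδ0 : 0 < δ := hε
    have hlow := abs_denom_lower hδ0 him habs ht0
    have hne : ((t:ℂ) ^ 2 - z ^ 2) ≠ 0 := by
      intro hcontra
      rw [hcontra] at hlow
      simp only [norm_zero] at hlow
      split_ifs at hlow
      · nlinarith
      · nlinarith
    have hden : HasDerivAt (fun w : ℂ => (t:ℂ) ^ 2 - w ^ 2) (0 - 2 * z) z := by
      have h1 : HasDerivAt (fun w : ℂ => w ^ 2) (2 * z) z := by
        simpa using hasDerivAt_pow 2 z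
      exact (hasDerivAt_const z ((t:ℂ)^2)).sub h1
    have hdiv := (hasDerivAt_const z (2 * ((t : ℂ) ^ (α : ℂ)))).div hden hne
    exact hdiv.congr_deriv (by ring)
    try ring

noncomputable def Psi (α : ℝ) (z : ℂ) : ℂ :=
  z ^ ((α : ℂ) - 1) * ((π : ℂ) / Complex.cos ((π:ℂ) * (α:ℂ) / 2)) *
    Complex.exp ((1 - (α : ℂ)) * (π:ℂ) * Complex.I / 2)

noncomputable def PsiM (α : ℝ) (z : ℂ) : ℂ :=
  z ^ ((α : ℂ) - 1) * ((π : ℂ) / Complex.cos ((π:ℂ) * (α:ℂ) / 2)) *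
    Complex.exp (-((1 - (α : ℂ)) * (π:ℂ) * Complex.I / 2))

lemma Cconst_eq (α : ℝ) :
    ((π : ℂ) / Complex.cos ((π:ℂ) * (α:ℂ) / 2)) = ((π / Real.cos (π * α / 2) : ℝ) : ℂ) := by
  have h : ((π * α / 2 : ℝ) : ℂ) = (π:ℂ) * (α:ℂ) / 2 := by push_cast; ring
  rw [Complex.ofReal_div, Complex.ofReal_cos, h]

lemma Psi_axis {α : ℝ} {y : ℝ} (hy : 0 < y) :
    Psi α (Complex.I * y) = ((y ^ (α - 1) * (π / Real.cos (π * α / 2)) : ℝ) : ℂ) := by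
  have hne : Complex.I * (y:ℂ) ≠ 0 := by
    simp [Complex.I_ne_zero, Complex.ofReal_ne_zero, hy.ne']
  have hlog : Complex.log (Complex.I * y) = ↑(Real.log y) + ↑(π/2) * Complex.I := by
    have harg : (Complex.I * (y:ℂ)).arg = π / 2 := by
      rw [mul_comm, Complex.arg_real_mul Complex.I hy, Complex.arg_I]
    have habs : ‖Complex.I * y‖ = y := by
      rw [norm_mul, Complex.norm_I, Complex.norm_real, Real.norm_eq_abs, one_mul, _root_.abs_of_pos hy]
    apply Complex.ext
    · simp [Complex.log_re, habs]
    · simp [Complex.log_im, harg]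
  rw [Psi, Complex.cpow_def_of_ne_zero hne, hlog, Cconst_eq]
  rw [mul_comm (Complex.exp _) _, mul_assoc, ← Complex.exp_add]
  have hexp : (↑(Real.log y) + ↑(π/2) * Complex.I) * ((α:ℂ) - 1)
      + (1 - (α : ℂ)) * (π:ℂ) * Complex.I / 2 = ((Real.log y * (α - 1) : ℝ) : ℂ) := by
    push_cast; ring
  rw [hexp, ← Complex.ofReal_exp, ← Real.rpow_def_of_pos hy]
  push_cast; ring

lemma Phi_axis {α : ℝ} (h0 : 0 < α) (h1 : α < 1) {y : ℝ} (hy : 0 < y) :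
    Phi α (Complex.I * y) = ((y ^ (α - 1) * (π / Real.cos (π * α / 2)) : ℝ) : ℂ) := by
  rw [Phi]
  have hcongr : ∀ t ∈ Ioi (0:ℝ),
      2 * ((t : ℂ) ^ (α : ℂ)) / ((t : ℂ) ^ 2 - (Complex.I * y) ^ 2)
        = ((2 * t ^ α / (t ^ 2 + y ^ 2) : ℝ) : ℂ) := by
    intro t ht
    have ht0 : (0:ℝ) < t := ht
    rw [← Complex.ofReal_cpow ht0.le]
    have hden : ((t : ℂ) ^ 2 - (Complex.I * y) ^ 2) = ((t ^ 2 + y ^ 2 : ℝ) : ℂ) := by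
      rw [mul_pow, Complex.I_sq]; push_cast; ring
    rw [hden]
    push_cast
    ring
  rw [setIntegral_congr_fun measurableSet_Ioi hcongr]
  have hJ : (((∫ t in Ioi (0:ℝ), 2 * t ^ α / (t ^ 2 + y ^ 2)) : ℝ) : ℂ)
      = ((y ^ (α - 1) * (π / Real.cos (π * α / 2)) : ℝ) : ℂ) := by
    exact_mod_cast congrArg Complex.ofReal (J_y h0 h1 hy)
  rw [← hJ]
  exact integral_ofReal

lemma Phi_eq_Psi_upper {α : ℝ} (h0 : 0 < α) (h1 : α < 1) :
    EqOn (Phi α) (Psi α) {z : ℂ | 0 < z.im} := by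
  have hopen : IsOpen {z : ℂ | 0 < z.im} := isOpen_lt continuous_const Complex.continuous_im
  have hconn : IsPreconnected {z : ℂ | 0 < z.im} := (convex_halfSpace_im_gt 0).isPreconnected
  have hPhi : AnalyticOnNhd ℂ (Phi α) {z : ℂ | 0 < z.im} := by
    refine DifferentiableOn.analyticOnNhd (fun z hz => ?_) hopen
    exact (Phi_differentiableAt h0 h1 (ne_of_gt hz)).differentiableWithinAt
  have hPsi : AnalyticOnNhd ℂ (Psi α) {z : ℂ | 0 < z.im} := by
    refine DifferentiableOn.analyticOnNhd (fun z hz => ?_) hopen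
    have hz' : z ∈ Complex.slitPlane := Complex.mem_slitPlane_iff.mpr (Or.inr (ne_of_gt hz))
    exact (((differentiableAt_id.cpow (differentiableAt_const _) hz').mul
      (differentiableAt_const _)).mul (differentiableAt_const _)).differentiableWithinAt
  have hI : Complex.I ∈ {z : ℂ | 0 < z.im} := by simp [Complex.I_im]
  refine hPhi.eqOn_of_preconnected_of_frequently_eq hPsi hconn hI ?_
  have hseq : Filter.Tendsto (fun n : ℕ => Complex.I * ((1 + ((n:ℝ)+1)⁻¹ : ℝ) : ℂ))
      atTop (nhdsWithin Complex.I {Complex.I}ᶜ) := by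
    rw [tendsto_nhdsWithin_iff]
    constructor
    · have h1 : Filter.Tendsto (fun n : ℕ => (1 + ((n:ℝ)+1)⁻¹ : ℝ)) atTop (nhds 1) := by
        have := tendsto_one_div_add_atTop_nhds_zero_nat (𝕜 := ℝ)
        simp only [one_div] at this
        simpa using tendsto_const_nhds.add this
      have h2 := (Complex.continuous_ofReal.tendsto (1:ℝ)).comp h1
      have h3 := tendsto_const_nhds (x := Complex.I) (f := atTop (α := ℕ)) |>.mul h2
      simpa using h3
    · filter_upwards with n
      simp only [Set.mem_compl_iff, Set.mem_singleton_iff]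
      intro hcontra
      have h1 : ((1 + ((n:ℝ)+1)⁻¹ : ℝ) : ℂ) = 1 := by
        have := mul_left_cancel₀ Complex.I_ne_zero (hcontra.trans (mul_one Complex.I).symm)
        exact this
      have h2 : (1 + ((n:ℝ)+1)⁻¹ : ℝ) = 1 := by exact_mod_cast h1
      have : (0:ℝ) < ((n:ℝ)+1)⁻¹ := by positivity
      linarith
  refine hseq.frequently (Filter.Frequently.of_forall (fun n => ?_))
  have hc : (0:ℝ) < 1 + ((n:ℝ)+1)⁻¹ := by positivity
  rw [Phi_axis h0 h1 hc, Psi_axis hc]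

lemma Phi_conj (α : ℝ) (z : ℂ) :
    Phi α ((starRingEnd ℂ) z) = (starRingEnd ℂ) (Phi α z) := by
  rw [Phi, Phi, ← integral_conj]
  refine setIntegral_congr_fun measurableSet_Ioi (fun t ht => ?_)
  have ht0 : (0:ℝ) < t := ht
  rw [← Complex.ofReal_cpow ht0.le]
  simp [map_div₀, map_mul, map_sub, map_pow, Complex.conj_ofReal, map_ofNat]

lemma LambdaFn_conj (α β lam : ℝ) (z : ℂ) :
    LambdaFn α β lam ((starRingEnd ℂ) z) = (starRingEnd ℂ) (LambdaFn α β lam z) := by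
  have h : LambdaFn α β lam z
      = ((Real.Gamma α * lam / ((1 - α / 2) * (1 - α)) : ℝ) : ℂ) * (z ^ 2 - (β : ℂ) ^ 2)
        + Phi α z := rfl
  have h2 : LambdaFn α β lam ((starRingEnd ℂ) z)
      = ((Real.Gamma α * lam / ((1 - α / 2) * (1 - α)) : ℝ) : ℂ)
          * (((starRingEnd ℂ) z) ^ 2 - (β : ℂ) ^ 2) + Phi α ((starRingEnd ℂ) z) := rfl
  rw [h, h2, Phi_conj]
  simp [map_add, map_mul, map_sub, map_pow, Complex.conj_ofReal, map_ofNat]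

lemma conj_Psi_conj {α : ℝ} {z : ℂ} (hz : z.im < 0) :
    (starRingEnd ℂ) (Psi α ((starRingEnd ℂ) z)) = PsiM α z := by
  have hexp : (α:ℂ) - 1 = ((α - 1 : ℝ) : ℂ) := by push_cast; ring
  have harg : z.arg ≠ π := fun h => by
    have := Complex.arg_eq_pi_iff.mp h
    linarith [this.2]
  have h1 : ((starRingEnd ℂ) z) ^ ((α:ℂ) - 1) = (starRingEnd ℂ) (z ^ ((α:ℂ) - 1)) := by
    rw [hexp]
    rw [Complex.conj_cpow z _ harg, Complex.conj_ofReal]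
  rw [Psi, PsiM, h1, Cconst_eq]
  rw [map_mul, map_mul, Complex.conj_conj, Complex.conj_ofReal, ← Complex.exp_conj]
  congr 2
  simp only [map_div₀, map_mul, map_sub, map_one, Complex.conj_I, Complex.conj_ofReal,
    map_ofNat]
  ring

lemma LambdaFn_upper (α β lam : ℝ) (h0 : 0 < α) (h1 : α < 1) {z : ℂ} (hz : 0 < z.im) :
    LambdaFn α β lam z
      = ((Real.Gamma α * lam / ((1 - α / 2) * (1 - α)) : ℝ) : ℂ) * (z ^ 2 - (β : ℂ) ^ 2)
        + Psi α z := by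
  have h : LambdaFn α β lam z
      = ((Real.Gamma α * lam / ((1 - α / 2) * (1 - α)) : ℝ) : ℂ) * (z ^ 2 - (β : ℂ) ^ 2)
        + Phi α z := rfl
  rw [h, Phi_eq_Psi_upper h0 h1 hz]

lemma LambdaFn_lower (α β lam : ℝ) (h0 : 0 < α) (h1 : α < 1) {z : ℂ} (hz : z.im < 0) :
    LambdaFn α β lam z
      = ((Real.Gamma α * lam / ((1 - α / 2) * (1 - α)) : ℝ) : ℂ) * (z ^ 2 - (β : ℂ) ^ 2)
        + PsiM α z := by
  have h : LambdaFn α β lam z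
      = ((Real.Gamma α * lam / ((1 - α / 2) * (1 - α)) : ℝ) : ℂ) * (z ^ 2 - (β : ℂ) ^ 2)
        + Phi α z := rfl
  rw [h]
  congr 1
  have hconj_im : (0:ℝ) < ((starRingEnd ℂ) z).im := by
    simpa using neg_pos.mpr hz
  have := Phi_conj α ((starRingEnd ℂ) z)
  rw [Complex.conj_conj] at this
  rw [this, Phi_eq_Psi_upper h0 h1 hconj_im, conj_Psi_conj hz]

lemma cos_pos_of_alpha {α : ℝ} (h0 : 0 < α) (h1 : α < 1) : 0 < Real.cos (π * α / 2) := by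
  apply Real.cos_pos_of_mem_Ioo
  constructor
  · have : 0 < π * α / 2 := by positivity
    linarith [Real.pi_pos]
  · have : π * α / 2 < π / 2 := by nlinarith [Real.pi_pos]
    exact this

lemma nu_exists_unique {α β lam : ℝ} (h0 : 0 < α) (h1 : α < 1) (hlam : 0 < lam) :
    ∃ ν : ℝ, 0 < ν ∧
      lam = ((1 - α / 2) * (1 - α) / Real.Gamma α) * (π / Real.cos (π * α / 2)) *
        ν ^ (α - 1) / (β ^ 2 + ν ^ 2) ∧
      ∀ ν' : ℝ, 0 < ν' →
        lam = ((1 - α / 2) * (1 - α) / Real.Gamma α) * (π / Real.cos (π * α / 2)) *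
          ν' ^ (α - 1) / (β ^ 2 + ν' ^ 2) → ν' = ν := by
  set K : ℝ := ((1 - α / 2) * (1 - α) / Real.Gamma α) * (π / Real.cos (π * α / 2)) with hKdef
  have hΓ : 0 < Real.Gamma α := Real.Gamma_pos_of_pos h0
  have hcos : 0 < Real.cos (π * α / 2) := cos_pos_of_alpha h0 h1
  have hK : 0 < K := by
    apply mul_pos
    · apply div_pos (by nlinarith) hΓ
    · exact div_pos Real.pi_pos hcos
  set R : ℝ → ℝ := fun ν => K * ν ^ (α - 1) / (β ^ 2 + ν ^ 2) with hRdef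
  have hanti : StrictAntiOn R (Ioi 0) := by
    intro x hx y hy hxy
    have hx0 : (0:ℝ) < x := hx
    have hy0 : (0:ℝ) < y := hy
    have hnum : y ^ (α - 1) < x ^ (α - 1) := by
      have h2 : x ^ (1 - α) < y ^ (1 - α) := Real.rpow_lt_rpow hx0.le hxy (by linarith)
      have e1 : x ^ (α - 1) = (x ^ (1 - α))⁻¹ := by
        rw [show α - 1 = -(1 - α) by ring, Real.rpow_neg hx0.le]
      have e2 : y ^ (α - 1) = (y ^ (1 - α))⁻¹ := by
        rw [show α - 1 = -(1 - α) by ring, Real.rpow_neg hy0.le]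
      rw [e1, e2]
      exact inv_strictAnti₀ (by positivity) h2
    have hd : (0:ℝ) < β ^ 2 + x ^ 2 := by positivity
    rw [hRdef]
    apply div_lt_div₀ (by nlinarith [Real.rpow_nonneg hy0.le (α-1)]) (by nlinarith) ?_ hd
    positivity
  have htop : Tendsto R (nhdsWithin 0 (Ioi 0)) atTop := by
    have h1 : Tendsto (fun ν : ℝ => ν ^ (α - 1)) (nhdsWithin 0 (Ioi 0)) atTop := by
      have h2 : Tendsto (fun ν : ℝ => (ν⁻¹) ^ (1 - α)) (nhdsWithin 0 (Ioi 0)) atTop :=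
        (tendsto_rpow_atTop (by linarith : (0:ℝ) < 1 - α)).comp tendsto_inv_nhdsGT_zero
      refine h2.congr' ?_
      filter_upwards [self_mem_nhdsWithin] with x hx
      have hx0 : (0:ℝ) < x := hx
      rw [Real.inv_rpow hx0.le, ← Real.rpow_neg hx0.le, show -(1-α) = α - 1 by ring]
    have h3 : Tendsto (fun ν : ℝ => (K / (β^2 + 1)) * ν ^ (α - 1))
        (nhdsWithin 0 (Ioi 0)) atTop :=
      h1.const_mul_atTop (by positivity)
    apply tendsto_atTop_mono' _ _ h3
    have hlt : ∀ᶠ x : ℝ in nhdsWithin 0 (Ioi 0), x < 1 :=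
      nhdsWithin_le_nhds (eventually_lt_nhds one_pos)
    filter_upwards [self_mem_nhdsWithin, hlt] with x hx hx1
    have hx0 : (0:ℝ) < x := hx
    rw [hRdef]
    have : K * x ^ (α-1) / (β^2 + 1) ≤ K * x ^ (α-1) / (β^2 + x^2) := by
      apply div_le_div_of_nonneg_left (by positivity) (by positivity) (by nlinarith)
    calc K / (β^2+1) * x ^ (α-1) = K * x ^ (α-1) / (β^2+1) := by ring
      _ ≤ _ := this
  have hbot : Tendsto R atTop (nhds 0) := by
    apply squeeze_zero' (g := fun x => K * x ^ (α - 3))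
    · filter_upwards [eventually_ge_atTop (1:ℝ)] with x hx
      have hx0 : (0:ℝ) < x := lt_of_lt_of_le one_pos hx
      rw [hRdef]
      positivity
    · filter_upwards [eventually_ge_atTop (1:ℝ)] with x hx
      have hx0 : (0:ℝ) < x := lt_of_lt_of_le one_pos hx
      rw [hRdef]
      have e : K * x ^ (α - 3) = K * x ^ (α-1) / x ^ 2 := by
        rw [show α - 3 = (α - 1) - 2 by ring, Real.rpow_sub hx0,
          show x ^ (2:ℝ) = x ^ 2 by
            rw [show (2:ℝ) = ((2:ℕ):ℝ) by norm_num, Real.rpow_natCast], mul_div_assoc]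
      rw [e]
      apply div_le_div_of_nonneg_left (by positivity) (by positivity) (by nlinarith)
    · have := (tendsto_rpow_neg_atTop (by linarith : (0:ℝ) < 3 - α)).const_mul K
      simp only [mul_zero] at this
      refine this.congr' ?_
      filter_upwards with x
      rw [show -(3 - α) = α - 3 by ring]
  obtain ⟨a, ha1, ha2⟩ := ((htop.eventually_gt_atTop lam).and self_mem_nhdsWithin).exists
  have ha0 : (0:ℝ) < a := ha2
  obtain ⟨b, hb1, hb2⟩ := ((hbot.eventually (eventually_lt_nhds hlam)).and
    (eventually_ge_atTop a)).exists
  have hb0 : (0:ℝ) < b := lt_of_lt_of_le ha0 hb2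
  have hcont : ContinuousOn R (Icc a b) := by
    intro x hx
    have hx0 : (0:ℝ) < x := lt_of_lt_of_le ha0 hx.1
    apply ContinuousAt.continuousWithinAt
    apply ContinuousAt.div
    · exact continuousAt_const.mul (Real.continuousAt_rpow_const x (α-1) (Or.inl hx0.ne'))
    · fun_prop
    · positivity
  obtain ⟨ν, hνmem, hRν⟩ := intermediate_value_Icc' hb2 hcont ⟨hb1.le, ha1.le⟩
  have hν0 : 0 < ν := lt_of_lt_of_le ha0 hνmem.1
  refine ⟨ν, hν0, hRν.symm, ?_⟩
  intro ν' hν' heq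
  exact hanti.injOn hν' hν0 (by show K * ν' ^ (α-1) / (β^2+ν'^2) = R ν; rw [← heq, hRν])

lemma Psi_im (α : ℝ) (z : ℂ) :
    (Psi α z).im = (π / Real.cos (π * α / 2)) * ‖z‖ ^ (α - 1)
      * Real.sin ((1 - α) * (π / 2 - z.arg)) := by
  have hexp : (α:ℂ) - 1 = ((α - 1 : ℝ) : ℂ) := by push_cast; ring
  have hE : (1 - (α : ℂ)) * (π:ℂ) * Complex.I / 2 = (((1 - α) * π / 2 : ℝ) : ℂ) * Complex.I := by
    push_cast; ring
  rw [Psi, hexp, hE, Cconst_eq, Complex.exp_mul_I, ← Complex.ofReal_cos, ← Complex.ofReal_sin]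
  simp only [Complex.mul_im, Complex.add_im, Complex.add_re, Complex.mul_re,
    Complex.ofReal_re, Complex.ofReal_im, Complex.I_re, Complex.I_im,
    Complex.cpow_ofReal_re, Complex.cpow_ofReal_im]
  rw [show (1 - α) * (π / 2 - z.arg) = z.arg * (α - 1) + (1 - α) * π / 2 by ring, Real.sin_add]
  ring

lemma LambdaFn_im_upper (α β lam : ℝ) (h0 : 0 < α) (h1 : α < 1) {z : ℂ} (hz : 0 < z.im) :
    (LambdaFn α β lam z).im
      = (Real.Gamma α * lam / ((1 - α / 2) * (1 - α))) * (2 * z.re * z.im)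
        + (π / Real.cos (π * α / 2)) * ‖z‖ ^ (α - 1)
          * Real.sin ((1 - α) * (π / 2 - z.arg)) := by
  rw [LambdaFn_upper α β lam h0 h1 hz, Complex.add_im, Psi_im]
  congr 1
  have h2 : (z ^ 2 - (β:ℂ) ^ 2).im = 2 * z.re * z.im := by
    simp [pow_two, Complex.mul_im, Complex.sub_im, Complex.ofReal_im, Complex.ofReal_re]
    ring
  rw [Complex.mul_im, Complex.ofReal_re, Complex.ofReal_im, h2]
  ring

lemma arg_bounds {z : ℂ} (hz : 0 < z.im) : 0 < z.arg ∧ z.arg < π := by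
  constructor
  · rcases lt_trichotomy z.arg 0 with h | h | h
    · exact absurd (Complex.arg_neg_iff.mp h) (by linarith)
    · exact absurd (Complex.arg_eq_zero_iff.mp h).2 (by linarith)
    · exact h
  · rcases eq_or_lt_of_le (Complex.arg_le_pi z) with h | h
    · exact absurd (Complex.arg_eq_pi_iff.mp h).2 (by linarith)
    · exact h

lemma axis_value (α β lam : ℝ) (h0 : 0 < α) (h1 : α < 1) {y : ℝ} (hy : 0 < y) :
    LambdaFn α β lam (Complex.I * y)
      = (((Real.Gamma α * lam / ((1 - α / 2) * (1 - α))) * (-y^2 - β^2)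
          + y ^ (α - 1) * (π / Real.cos (π * α / 2)) : ℝ) : ℂ) := by
  have h : LambdaFn α β lam (Complex.I * y)
      = ((Real.Gamma α * lam / ((1 - α / 2) * (1 - α)) : ℝ) : ℂ)
          * ((Complex.I * y) ^ 2 - (β : ℂ) ^ 2) + Phi α (Complex.I * y) := rfl
  rw [h, Phi_axis h0 h1 hy]
  have h2 : ((Complex.I * y) ^ 2 - (β : ℂ) ^ 2) = ((-y^2 - β^2 : ℝ) : ℂ) := by
    rw [mul_pow, Complex.I_sq]; push_cast; ring
  rw [h2]
  push_cast
  ring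

lemma axis_zero_iff (α β lam : ℝ) (h0 : 0 < α) (h1 : α < 1) (hlam : 0 < lam) {y : ℝ}
    (hy : 0 < y) :
    LambdaFn α β lam (Complex.I * y) = 0 ↔
      lam = ((1 - α / 2) * (1 - α) / Real.Gamma α) * (π / Real.cos (π * α / 2)) *
        y ^ (α - 1) / (β ^ 2 + y ^ 2) := by
  rw [axis_value α β lam h0 h1 hy, Complex.ofReal_eq_zero]
  have hΓ : 0 < Real.Gamma α := Real.Gamma_pos_of_pos h0
  have hc : (0:ℝ) < (1 - α / 2) * (1 - α) := by nlinarith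
  have hden : (0:ℝ) < β ^ 2 + y ^ 2 := by positivity
  have hcos : 0 < Real.cos (π * α / 2) := cos_pos_of_alpha h0 h1
  have hc0 : ((1 - α / 2) * (1 - α)) ≠ 0 := hc.ne'
  have hΓ0 : Real.Gamma α ≠ 0 := hΓ.ne'
  have hD0 : (β ^ 2 + y ^ 2) ≠ 0 := hden.ne'
  have hcos0 : Real.cos (π * α / 2) ≠ 0 := hcos.ne'
  rw [show (Real.Gamma α * lam / ((1 - α / 2) * (1 - α))) * (-y^2 - β^2)
        + y ^ (α - 1) * (π / Real.cos (π * α / 2))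
      = (Real.Gamma α * lam * (-y^2 - β^2) * Real.cos (π * α / 2)
          + ((1 - α / 2) * (1 - α)) * (y ^ (α - 1) * π))
        / (((1 - α / 2) * (1 - α)) * Real.cos (π * α / 2)) by
      rw [div_mul_eq_mul_div, ← mul_div_assoc, div_add_div _ _ hc0 hcos0]]
  rw [div_eq_zero_iff, or_iff_left (mul_ne_zero hc0 hcos0)]
  rw [show ((1 - α / 2) * (1 - α) / Real.Gamma α) * (π / Real.cos (π * α / 2)) * y ^ (α - 1)
        / (β ^ 2 + y ^ 2)
      = ((1 - α / 2) * (1 - α) * π * y ^ (α - 1))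
        / (Real.Gamma α * Real.cos (π * α / 2) * (β ^ 2 + y ^ 2)) by
      rw [div_mul_div_comm, div_mul_eq_mul_div, div_div]]
  rw [eq_div_iff (by exact mul_ne_zero (mul_ne_zero hΓ0 hcos0) hD0)]
  constructor
  · intro h
    linear_combination -h
  · intro h
    linear_combination -h

lemma zero_upper (α β lam : ℝ) (h0 : 0 < α) (h1 : α < 1) (hlam : 0 < lam)
    {ν : ℝ} (hν : 0 < ν)
    (hlameq : lam = ((1 - α / 2) * (1 - α) / Real.Gamma α) * (π / Real.cos (π * α / 2)) *
        ν ^ (α - 1) / (β ^ 2 + ν ^ 2))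
    (huniq : ∀ ν' : ℝ, 0 < ν' →
        lam = ((1 - α / 2) * (1 - α) / Real.Gamma α) * (π / Real.cos (π * α / 2)) *
          ν' ^ (α - 1) / (β ^ 2 + ν' ^ 2) → ν' = ν)
    {z : ℂ} (hz : 0 < z.im) :
    LambdaFn α β lam z = 0 ↔ z = Complex.I * ν := by
  constructor
  · intro heq
    have hz0 : z ≠ 0 := fun h => by simp [h] at hz
    have him : (LambdaFn α β lam z).im = 0 := by rw [heq]; rfl
    rw [LambdaFn_im_upper α β lam h0 h1 hz] at him
    obtain ⟨harg0, hargpi⟩ := arg_bounds hz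
    have hA : 0 < Real.Gamma α * lam / ((1 - α / 2) * (1 - α)) := by
      have hΓ : 0 < Real.Gamma α := Real.Gamma_pos_of_pos h0
      have hc : (0:ℝ) < (1 - α / 2) * (1 - α) := by nlinarith
      exact div_pos (mul_pos hΓ hlam) hc
    have hC : 0 < π / Real.cos (π * α / 2) :=
      div_pos Real.pi_pos (cos_pos_of_alpha h0 h1)
    have hr : 0 < ‖z‖ ^ (α - 1) := by
      have habs : 0 < ‖z‖ := norm_pos_iff.mpr hz0
      exact Real.rpow_pos_of_pos habs _
    have hre : z.re = 0 := by
      have hcosarg : Real.cos z.arg = z.re / ‖z‖ := Complex.cos_arg hz0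
      have habs : 0 < ‖z‖ := norm_pos_iff.mpr hz0
      rcases lt_trichotomy z.re 0 with hre | hre | hre
      · -- θ > π/2, both terms negative
        exfalso
        have hcosneg : Real.cos z.arg < 0 := by
          rw [hcosarg]; exact div_neg_of_neg_of_pos hre habs
        have hθ : π / 2 < z.arg := by
          by_contra h
          push_neg at h
          have := Real.cos_nonneg_of_mem_Icc (x := z.arg)
            ⟨by linarith [Real.pi_pos], h⟩
          linarith
        have hψ : (1 - α) * (π / 2 - z.arg) < 0 := by
          apply mul_neg_of_pos_of_neg (by linarith)
          linarith
        have hψ2 : -π < (1 - α) * (π / 2 - z.arg) := by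
          nlinarith [Real.pi_pos]
        have hsin : Real.sin ((1 - α) * (π / 2 - z.arg)) < 0 := by
          have := Real.sin_pos_of_pos_of_lt_pi (x := -((1 - α) * (π / 2 - z.arg)))
            (by linarith) (by linarith)
          rw [Real.sin_neg] at this
          linarith
        nlinarith [mul_pos hC hr, mul_pos hA (mul_pos (by nlinarith : (0:ℝ) < 2 * (-z.re))
          hz)]
      · exact hre
      · -- θ < π/2, both terms positive
        exfalso
        have hcospos : 0 < Real.cos z.arg := by
          rw [hcosarg]; exact div_pos hre habs
        have hθ : z.arg < π / 2 := by
          by_contra h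
          push_neg at h
          have := Real.cos_nonpos_of_pi_div_two_le_of_le h (by linarith [Real.pi_pos])
          linarith
        have hψ : 0 < (1 - α) * (π / 2 - z.arg) := by
          apply mul_pos (by linarith)
          linarith
        have hψ2 : (1 - α) * (π / 2 - z.arg) < π := by
          nlinarith [Real.pi_pos]
        have hsin : 0 < Real.sin ((1 - α) * (π / 2 - z.arg)) :=
          Real.sin_pos_of_pos_of_lt_pi hψ hψ2
        nlinarith [mul_pos hC hr, mul_pos hA (mul_pos (by nlinarith : (0:ℝ) < 2 * z.re) hz)]
    have hzer : z = Complex.I * (z.im : ℂ) := by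
      apply Complex.ext
      · simp [hre]
      · simp
    rw [hzer] at heq
    have := (axis_zero_iff α β lam h0 h1 hlam hz).mp heq
    have hy := huniq z.im hz this
    rw [hzer, hy]
  · intro h
    rw [h]
    exact (axis_zero_iff α β lam h0 h1 hlam hν).mpr hlameq


/-- Closed form for `Λ`, unique solvability of the characteristic equation, and
the zeros of `Λ` off the real axis. -/
theorem LambdaFn_closed_form_and_zeros
    (α β lam : ℝ) (hα : α ∈ Set.Ioo (0:ℝ) 1) (hlam : 0 < lam) :
    (∀ z : ℂ, 0 < z.im →
      LambdaFn α β lam z =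
        ((Real.Gamma α * lam / ((1 - α / 2) * (1 - α)) : ℝ) : ℂ) * (z ^ 2 - (β : ℂ) ^ 2) +
          z ^ ((α : ℂ) - 1) * ((π : ℂ) / Complex.cos (π * α / 2)) *
            Complex.exp ((1 - (α : ℂ)) * π * Complex.I / 2)) ∧
    (∀ z : ℂ, z.im < 0 →
      LambdaFn α β lam z =
        ((Real.Gamma α * lam / ((1 - α / 2) * (1 - α)) : ℝ) : ℂ) * (z ^ 2 - (β : ℂ) ^ 2) +
          z ^ ((α : ℂ) - 1) * ((π : ℂ) / Complex.cos (π * α / 2)) *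
            Complex.exp (-((1 - (α : ℂ)) * π * Complex.I / 2))) ∧
    (∃ ν : ℝ, 0 < ν ∧
      lam = ((1 - α / 2) * (1 - α) / Real.Gamma α) * (π / Real.cos (π * α / 2)) *
        ν ^ (α - 1) / (β ^ 2 + ν ^ 2) ∧
      (∀ ν' : ℝ, 0 < ν' →
        lam = ((1 - α / 2) * (1 - α) / Real.Gamma α) * (π / Real.cos (π * α / 2)) *
          ν' ^ (α - 1) / (β ^ 2 + ν' ^ 2) → ν' = ν) ∧
      (∀ z : ℂ, z.im ≠ 0 →
        (LambdaFn α β lam z = 0 ↔ z = Complex.I * ν ∨ z = -(Complex.I * ν)))) := by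
  obtain ⟨h0, h1⟩ := hα
  obtain ⟨ν, hν, hlameq, huniq⟩ := nu_exists_unique (β := β) h0 h1 hlam
  have hconj_Iν : (starRingEnd ℂ) (Complex.I * (ν:ℂ)) = -(Complex.I * (ν:ℂ)) := by
    simp [map_mul, Complex.conj_I, Complex.conj_ofReal]
  have hIν_im : (Complex.I * (ν:ℂ)).im = ν := by simp
  refine ⟨fun z hz => LambdaFn_upper α β lam h0 h1 hz,
    fun z hz => LambdaFn_lower α β lam h0 h1 hz, ν, hν, hlameq, huniq, ?_⟩
  intro z hz
  rcases lt_or_gt_of_ne hz with hneg | hpos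
  · have hconj : 0 < ((starRingEnd ℂ) z).im := by
      simpa using neg_pos.mpr hneg
    have hiff := zero_upper α β lam h0 h1 hlam hν hlameq huniq (z := (starRingEnd ℂ) z) hconj
    constructor
    · intro h
      have h2 : LambdaFn α β lam ((starRingEnd ℂ) z) = 0 := by
        rw [LambdaFn_conj, h, map_zero]
      have hzeq := hiff.mp h2
      right
      have h3 := congrArg (starRingEnd ℂ) hzeq
      rw [Complex.conj_conj, hconj_Iν] at h3
      exact h3
    · rintro (h | h)
      · exfalso
        rw [h] at hneg
        rw [hIν_im] at hneg
        linarith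
      · rw [h]
        have hup : 0 < (Complex.I * (ν:ℂ)).im := by rw [hIν_im]; exact hν
        have h1' : LambdaFn α β lam (Complex.I * (ν:ℂ)) = 0 :=
          (zero_upper α β lam h0 h1 hlam hν hlameq huniq hup).mpr rfl
        have h2' : LambdaFn α β lam ((starRingEnd ℂ) (Complex.I * (ν:ℂ))) = 0 := by
          rw [LambdaFn_conj, h1', map_zero]
        rwa [hconj_Iν] at h2'
  · have hiff := zero_upper α β lam h0 h1 hlam hν hlameq huniq hpos
    rw [hiff]
    constructor
    · exact Or.inl
    · rintro (h | h)
      · exact h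
      · exfalso
        rw [h] at hpos
        simp only [Complex.neg_im, hIν_im] at hpos
        linarith
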